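/- For every θ ∈ (0, π/2), lim_{m→∞} (1/(2m))·log( ∑_{k=0}^{m} C(m,k)² · (cos²θ)^{m−k} · (sin²θ)^{k} / C(2m,k) ) = log((1+cos θ)/2). -/

import Mathlib

open Filter Real Finset

private lemma aux_choose (m k : ℕ) (hk : k ≤ m) :
    (2*m).choose m * m.choose k = (2*m).choose k * (2*m - k).choose m := by
  have h := Nat.choose_mul (n := 2*m) (k := m) (s := k) hk
  rw [h]
  congr 1
  rw [← Nat.choose_symm (by omega : m ≤ 2*m - k)]
  congr 1
  omega

private lemma aux_expand (m k : ℕ) (hk : k ≤ m) :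
    m.choose k * (2*m - k).choose m
      = ∑ j ∈ range (m+1), m.choose j * m.choose j * j.choose k := by
  have h2 : 2*m - k = m + (m - k) := by omega
  rw [h2, Nat.add_choose_eq, Finset.Nat.sum_antidiagonal_eq_sum_range_succ_mk, Finset.mul_sum]
  apply Finset.sum_congr rfl
  intro j hj
  simp only [Finset.mem_range] at hj
  by_cases hjk : k ≤ j
  · have hsymm : (m - k).choose (m - j) = (m - k).choose (j - k) := by
      rw [← Nat.choose_symm (by omega : m - j ≤ m - k)]
      congr 1
      omega
    have h3 := Nat.choose_mul (n := m) (k := j) (s := k) hjk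
    rw [hsymm]
    calc m.choose k * (m.choose j * (m - k).choose (j - k))
        = m.choose j * (m.choose k * (m - k).choose (j - k)) := by ring
      _ = m.choose j * (m.choose j * j.choose k) := by rw [← h3]
      _ = m.choose j * m.choose j * j.choose k := by ring
  · have h0 : (m - k).choose (m - j) = 0 := Nat.choose_eq_zero_of_lt (by omega)
    have h1 : j.choose k = 0 := Nat.choose_eq_zero_of_lt (by omega)
    rw [h0, h1]
    ring

private lemma aux_sum_id (m : ℕ) (y : ℝ) :
    ∑ k ∈ range (m+1), (m.choose k : ℝ) * ((2*m - k).choose m : ℝ) * y^(m-k) * (1-y)^k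
      = ∑ j ∈ range (m+1), (m.choose j : ℝ)^2 * y^(m-j) := by
  have step1 : ∀ k ∈ range (m+1),
      (m.choose k : ℝ) * ((2*m - k).choose m : ℝ) * y^(m-k) * (1-y)^k
        = ∑ j ∈ range (m+1),
            (m.choose j : ℝ)^2 * ((j.choose k : ℝ) * (y^(m-k) * (1-y)^k)) := by
    intro k hk
    simp only [Finset.mem_range] at hk
    have := aux_expand m k (by omega)
    have hcast : (m.choose k : ℝ) * ((2*m - k).choose m : ℝ)
        = ∑ j ∈ range (m+1), (m.choose j : ℝ) * (m.choose j : ℝ) * (j.choose k : ℝ) := by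
      exact_mod_cast congrArg (Nat.cast : ℕ → ℝ) this
    calc (m.choose k : ℝ) * ((2*m - k).choose m : ℝ) * y^(m-k) * (1-y)^k
        = ((m.choose k : ℝ) * ((2*m - k).choose m : ℝ)) * (y^(m-k) * (1-y)^k) := by ring
      _ = (∑ j ∈ range (m+1), (m.choose j : ℝ) * (m.choose j : ℝ) * (j.choose k : ℝ))
            * (y^(m-k) * (1-y)^k) := by rw [hcast]
      _ = ∑ j ∈ range (m+1),
            (m.choose j : ℝ)^2 * ((j.choose k : ℝ) * (y^(m-k) * (1-y)^k)) := by
          rw [Finset.sum_mul]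
          apply Finset.sum_congr rfl
          intro j _
          ring
  rw [Finset.sum_congr rfl step1, Finset.sum_comm]
  apply Finset.sum_congr rfl
  intro j hj
  simp only [Finset.mem_range] at hj
  rw [← Finset.mul_sum]
  congr 1
  have hrestrict : ∑ k ∈ range (m+1), (j.choose k : ℝ) * (y^(m-k) * (1-y)^k)
      = ∑ k ∈ range (j+1), (j.choose k : ℝ) * (y^(m-k) * (1-y)^k) := by
    refine (Finset.sum_subset (by intro a ha; simp only [Finset.mem_range] at *; omega) ?_).symm
    intro a _ ha
    simp only [Finset.mem_range] at ha
    have : j.choose a = 0 := Nat.choose_eq_zero_of_lt (by omega)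
    rw [this]
    simp
  rw [hrestrict]
  have hbin : ((1-y) + y)^j = ∑ k ∈ range (j+1), (1-y)^k * y^(j-k) * (j.choose k : ℝ) :=
    add_pow (1-y) y j
  have hsplit : ∀ k ∈ range (j+1),
      (j.choose k : ℝ) * (y^(m-k) * (1-y)^k)
        = y^(m-j) * ((1-y)^k * y^(j-k) * (j.choose k : ℝ)) := by
    intro k hk
    simp only [Finset.mem_range] at hk
    have hpow : y^(m-k) = y^(m-j) * y^(j-k) := by
      rw [← pow_add]
      congr 1
      omega
    rw [hpow]
    ring
  rw [Finset.sum_congr rfl hsplit, ← Finset.mul_sum, ← hbin]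
  simp

private lemma central_le (m : ℕ) : (2*m).choose m ≤ 4^m := by
  calc (2*m).choose m ≤ ∑ i ∈ range (2*m+1), (2*m).choose i :=
        Finset.single_le_sum (fun i _ => Nat.zero_le _)
          (Finset.mem_range.mpr (by omega))
    _ = 2^(2*m) := Nat.sum_range_choose (2*m)
    _ = 4^m := by rw [pow_mul]; norm_num

private lemma four_le (m : ℕ) : 4^m ≤ (2*m+1) * (2*m).choose m := by
  calc 4^m = 2^(2*m) := by rw [pow_mul]; norm_num
    _ = ∑ i ∈ range (2*m+1), (2*m).choose i := (Nat.sum_range_choose (2*m)).symm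
    _ ≤ ∑ _i ∈ range (2*m+1), (2*m).choose m := by
        apply Finset.sum_le_sum
        intro i _
        have := Nat.choose_le_middle i (2*m)
        simpa [Nat.mul_div_cancel_left m (by norm_num : 0 < 2)] using this
    _ = (2*m+1) * (2*m).choose m := by
        rw [Finset.sum_const, Finset.card_range, smul_eq_mul]

theorem ghz_class_vertex_rate (θ : ℝ) (hθ0 : 0 < θ) (hθ : θ < Real.pi / 2) :
    Tendsto
      (fun m : ℕ =>
        (1 / (2 * (m : ℝ))) *
          Real.log (∑ k ∈ Finset.range (m + 1),
            (m.choose k : ℝ) ^ 2 * (Real.cos θ ^ 2) ^ (m - k) * (Real.sin θ ^ 2) ^ k /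
              ((2 * m).choose k : ℝ)))
      atTop (nhds (Real.log ((1 + Real.cos θ) / 2))) := by
  set x : ℝ := Real.cos θ with hxdef
  have hx0 : 0 < x := Real.cos_pos_of_mem_Ioo ⟨by linarith [Real.pi_pos], hθ⟩
  have hx1 : 0 < 1 + x := by linarith
  have hA0 : 0 < (1 + x) / 2 := by linarith
  have hsin : Real.sin θ ^ 2 = 1 - x ^ 2 := by
    have := Real.sin_sq_add_cos_sq θ
    linarith
  set S : ℕ → ℝ := fun m => ∑ k ∈ Finset.range (m + 1),
      (m.choose k : ℝ) ^ 2 * (Real.cos θ ^ 2) ^ (m - k) * (Real.sin θ ^ 2) ^ k /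
        ((2 * m).choose k : ℝ) with hSdef
  set U : ℕ → ℝ := fun m => ∑ j ∈ Finset.range (m + 1),
      (m.choose j : ℝ)^2 * (x^2)^(m-j) with hUdef
  -- S m = U m / C(2m, m)
  have hSU : ∀ m : ℕ, S m = U m / ((2*m).choose m : ℝ) := by
    intro m
    have hCm : (0:ℝ) < ((2*m).choose m : ℝ) := by
      exact_mod_cast Nat.choose_pos (by omega)
    rw [hSdef]
    simp only
    rw [eq_div_iff (ne_of_gt hCm), Finset.sum_mul]
    have hstep : ∀ k ∈ Finset.range (m+1),
        (m.choose k : ℝ) ^ 2 * (Real.cos θ ^ 2) ^ (m - k) * (Real.sin θ ^ 2) ^ k /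
          ((2 * m).choose k : ℝ) * ((2*m).choose m : ℝ)
        = (m.choose k : ℝ) * (((2*m) - k).choose m : ℝ) * (x^2)^(m-k) * (1-x^2)^k := by
      intro k hk
      simp only [Finset.mem_range] at hk
      have hCk : (0:ℝ) < ((2*m).choose k : ℝ) := by
        exact_mod_cast Nat.choose_pos (by omega)
      have hkey : ((2*m).choose m : ℝ) * (m.choose k : ℝ)
          = ((2*m).choose k : ℝ) * ((2*m - k).choose m : ℝ) := by
        exact_mod_cast congrArg (Nat.cast : ℕ → ℝ) (aux_choose m k (by omega))
      rw [hsin, ← hxdef, div_mul_eq_mul_div, div_eq_iff (ne_of_gt hCk)]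
      linear_combination ((m.choose k : ℝ) * (x^2)^(m-k) * (1-x^2)^k) * hkey
    rw [Finset.sum_congr rfl hstep]
    have := aux_sum_id m (x^2)
    rw [hUdef]
    simpa using this
  -- bounds on U
  have hUup : ∀ m : ℕ, U m ≤ (1+x)^(2*m) := by
    intro m
    have h1 : U m = ∑ j ∈ Finset.range (m+1), ((m.choose j : ℝ) * x^(m-j))^2 := by
      apply Finset.sum_congr rfl
      intro j _
      rw [mul_pow, ← pow_mul, ← pow_mul]
      ring_nf
    have h2 : ∑ j ∈ Finset.range (m+1), (m.choose j : ℝ) * x^(m-j) = (1+x)^m := by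
      rw [add_pow 1 x m]
      apply Finset.sum_congr rfl
      intro j _
      simp [mul_comm]
    calc U m = ∑ j ∈ Finset.range (m+1), ((m.choose j : ℝ) * x^(m-j))^2 := h1
      _ ≤ (∑ j ∈ Finset.range (m+1), (m.choose j : ℝ) * x^(m-j))^2 :=
          sum_sq_le_sq_sum_of_nonneg (fun j _ => by positivity)
      _ = ((1+x)^m)^2 := by rw [h2]
      _ = (1+x)^(2*m) := by rw [← pow_mul, mul_comm]
  have hUlo : ∀ m : ℕ, (1+x)^(2*m) ≤ (m+1 : ℝ) * U m := by
    intro m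
    have h1 : U m = ∑ j ∈ Finset.range (m+1), ((m.choose j : ℝ) * x^(m-j))^2 := by
      apply Finset.sum_congr rfl
      intro j _
      rw [mul_pow, ← pow_mul, ← pow_mul]
      ring_nf
    have h2 : ∑ j ∈ Finset.range (m+1), (m.choose j : ℝ) * x^(m-j) = (1+x)^m := by
      rw [add_pow 1 x m]
      apply Finset.sum_congr rfl
      intro j _
      simp [mul_comm]
    have h3 := sq_sum_le_card_mul_sum_sq
      (s := Finset.range (m+1)) (f := fun j => (m.choose j : ℝ) * x^(m-j))
    rw [h2, Finset.card_range] at h3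
    rw [h1]
    calc (1+x)^(2*m) = ((1+x)^m)^2 := by rw [← pow_mul, mul_comm]
      _ ≤ (m+1 : ℝ) * ∑ j ∈ Finset.range (m+1), ((m.choose j : ℝ) * x^(m-j))^2 := by
          exact_mod_cast h3
  -- bounds on S
  have hCpos : ∀ m : ℕ, (0:ℝ) < ((2*m).choose m : ℝ) := fun m => by
    exact_mod_cast Nat.choose_pos (by omega)
  have hSlo : ∀ m : ℕ, ((1+x)/2)^(2*m) / (m+1 : ℝ) ≤ S m := by
    intro m
    rw [hSU m]
    have hCle : ((2*m).choose m : ℝ) ≤ 4^m := by exact_mod_cast central_le m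
    have h4 : (0:ℝ) < 4^m := by positivity
    have hUpos : (1+x)^(2*m) / (m+1 : ℝ) ≤ U m := by
      rw [div_le_iff₀ (by positivity)]
      linarith [hUlo m, mul_comm (U m) ((m:ℝ)+1)]
    have hA : ((1+x)/2)^(2*m) = (1+x)^(2*m) / 4^m := by
      rw [div_pow]
      congr 1
      rw [pow_mul]
      norm_num
    rw [hA]
    calc (1+x)^(2*m) / 4^m / (m+1 : ℝ)
        ≤ (1+x)^(2*m) / ((2*m).choose m : ℝ) / (m+1 : ℝ) := by
          have := div_le_div_of_nonneg_left (by positivity : (0:ℝ) ≤ (1+x)^(2*m)) (hCpos m) hCle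
          gcongr
      _ = (1+x)^(2*m) / (m+1 : ℝ) / ((2*m).choose m : ℝ) := by ring
      _ ≤ U m / ((2*m).choose m : ℝ) := by gcongr
  have hSup : ∀ m : ℕ, S m ≤ (2*m+1 : ℝ) * ((1+x)/2)^(2*m) := by
    intro m
    rw [hSU m]
    have hfour : (4:ℝ)^m ≤ (2*m+1 : ℝ) * ((2*m).choose m : ℝ) := by
      exact_mod_cast four_le m
    have hA : ((1+x)/2)^(2*m) = (1+x)^(2*m) / 4^m := by
      rw [div_pow]
      congr 1
      rw [pow_mul]
      norm_num
    rw [hA]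
    rw [div_le_iff₀ (hCpos m)]
    have hU0 : 0 ≤ U m := by
      rw [hUdef]
      apply Finset.sum_nonneg
      intro j _
      positivity
    calc U m ≤ (1+x)^(2*m) := hUup m
      _ = (2*m+1 : ℝ) * ((1+x)^(2*m) / 4^m) * (4^m / (2*m+1 : ℝ)) := by
          field_simp
      _ ≤ (2*m+1 : ℝ) * ((1+x)^(2*m) / 4^m) * ((2*m).choose m : ℝ) := by
          apply mul_le_mul_of_nonneg_left _ (by positivity)
          rw [div_le_iff₀ (by positivity)]
          linarith [hfour, mul_comm ((2*m).choose m : ℝ) (2*(m:ℝ)+1)]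
  -- squeeze
  have hSpos : ∀ m : ℕ, 0 < S m := by
    intro m
    calc (0:ℝ) < ((1+x)/2)^(2*m) / (m+1 : ℝ) := by positivity
      _ ≤ S m := hSlo m
  -- lower and upper sequences
  have t1 : Tendsto (fun m : ℕ => Real.log ((m:ℝ)+1) / (2*(m:ℝ))) atTop (nhds 0) := by
    have h := Real.tendsto_pow_log_div_mul_add_atTop 2 (-2) 1 two_ne_zero
    have hcomp : Tendsto (fun m : ℕ => ((m:ℝ)+1)) atTop atTop :=
      tendsto_atTop_add_const_right _ 1 tendsto_natCast_atTop_atTop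
    have := h.comp hcomp
    refine this.congr fun m => ?_
    simp only [Function.comp_apply, pow_one]
    congr 1
    ring
  have t2 : Tendsto (fun m : ℕ => Real.log (2*(m:ℝ)+1) / (2*(m:ℝ))) atTop (nhds 0) := by
    have h := Real.tendsto_pow_log_div_mul_add_atTop 1 (-1) 1 one_ne_zero
    have hcomp : Tendsto (fun m : ℕ => (2*(m:ℝ)+1)) atTop atTop := by
      apply tendsto_atTop_add_const_right
      exact (tendsto_natCast_atTop_atTop).const_mul_atTop (by norm_num)
    have := h.comp hcomp
    refine this.congr fun m => ?_
    simp only [Function.comp_apply, pow_one]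
    congr 1
    ring
  have hlowlim : Tendsto (fun m : ℕ => Real.log ((1+x)/2) - Real.log ((m:ℝ)+1) / (2*(m:ℝ)))
      atTop (nhds (Real.log ((1+x)/2))) := by
    have := (tendsto_const_nhds (x := Real.log ((1+x)/2)) (f := atTop (α := ℕ))).sub t1
    simpa using this
  have huplim : Tendsto (fun m : ℕ => Real.log ((1+x)/2) + Real.log (2*(m:ℝ)+1) / (2*(m:ℝ)))
      atTop (nhds (Real.log ((1+x)/2))) := by
    have := (tendsto_const_nhds (x := Real.log ((1+x)/2)) (f := atTop (α := ℕ))).add t2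
    simpa using this
  refine tendsto_of_tendsto_of_tendsto_of_le_of_le' hlowlim huplim ?_ ?_
  · filter_upwards [eventually_ge_atTop 1] with m hm
    have hm0 : (0:ℝ) < 2*(m:ℝ) := by
      have : (1:ℝ) ≤ (m:ℝ) := by exact_mod_cast hm
      linarith
    have hlog1 : Real.log (((1+x)/2)^(2*m) / (m+1 : ℝ)) ≤ Real.log (S m) :=
      Real.log_le_log (by positivity) (hSlo m)
    have hexp : Real.log (((1+x)/2)^(2*m) / (m+1 : ℝ))
        = 2*(m:ℝ) * Real.log ((1+x)/2) - Real.log ((m:ℝ)+1) := by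
      rw [Real.log_div (by positivity) (by positivity), Real.log_pow]
      push_cast
      ring
    rw [hexp] at hlog1
    have : Real.log ((1+x)/2) - Real.log ((m:ℝ)+1) / (2*(m:ℝ))
        = (1 / (2*(m:ℝ))) * (2*(m:ℝ) * Real.log ((1+x)/2) - Real.log ((m:ℝ)+1)) := by
      field_simp
    rw [this]
    apply mul_le_mul_of_nonneg_left hlog1 (by positivity)
  · filter_upwards [eventually_ge_atTop 1] with m hm
    have hm0 : (0:ℝ) < 2*(m:ℝ) := by
      have : (1:ℝ) ≤ (m:ℝ) := by exact_mod_cast hm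
      linarith
    have hlog1 : Real.log (S m) ≤ Real.log ((2*m+1 : ℝ) * ((1+x)/2)^(2*m)) :=
      Real.log_le_log (hSpos m) (hSup m)
    have hexp : Real.log ((2*m+1 : ℝ) * ((1+x)/2)^(2*m))
        = 2*(m:ℝ) * Real.log ((1+x)/2) + Real.log (2*(m:ℝ)+1) := by
      rw [Real.log_mul (by positivity) (by positivity), Real.log_pow]
      push_cast
      ring
    rw [hexp] at hlog1
    have : Real.log ((1+x)/2) + Real.log (2*(m:ℝ)+1) / (2*(m:ℝ))
        = (1 / (2*(m:ℝ))) * (2*(m:ℝ) * Real.log ((1+x)/2) + Real.log (2*(m:ℝ)+1)) := by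
      field_simp
    rw [this]
    apply mul_le_mul_of_nonneg_left hlog1 (by positivity)
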